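/- Let k ≥ 1 and h ≥ 1 be natural numbers, and let w_1, …, w_k be integers with each w_r ∈ {0, 1}. Define f : ℕ → ℤ by f(x) = Σ_{r=1}^{k} w_r · Σ_{j=0}^{r} (−1)^{r−j} · C(2j,j) · C(k−j, r−j) · C(x+j, 2j). Then the following are equivalent: (1) for every x ∈ {0, 1, …, k−1}, f(x+1) − f(x) ≡ 2^h (mod 2^{h+1}); (2) there exist integers v_1, …, v_k such that (a) v_j ≡ 2^{h−1} (mod 2^h) for every j whose binary digit sum σ₂(j) equals 1 (i.e. j a power of 2), (b) 2^{h+1−σ₂(j)} divides v_j for every j with 2 ≤ σ₂(j) ≤ h, and (c) for every r ∈ {1, …, k}, w_r ≡ Σ_{j=1}^{k} v_j · C(k−r, j−r) (mod 2^h). -/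

import Mathlib

open Finset


-- digit sum lemmas
lemma sd_ne_zero {n : ℕ} (hn : n ≠ 0) : (Nat.digits 2 n).sum ≠ 0 := by
  intro h
  have hnil : Nat.digits 2 n ≠ [] := Nat.digits_ne_nil_iff_ne_zero.mpr hn
  have hlast := Nat.getLast_digit_ne_zero 2 hn
  exact hlast (List.sum_eq_zero_iff.mp h _ (List.getLast_mem hnil))

lemma sd_two_mul (n : ℕ) : (Nat.digits 2 (2 * n)).sum = (Nat.digits 2 n).sum := by
  rcases Nat.eq_zero_or_pos n with h | h
  · simp [h]
  · rw [Nat.digits_def' (by norm_num) (by omega)]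
    simp [Nat.mul_div_cancel_left _ (by norm_num : 0 < 2)]

lemma sd_pow (t : ℕ) : (Nat.digits 2 (2 ^ t)).sum = 1 := by
  induction t with
  | zero => simp
  | succ t ih => rw [pow_succ, mul_comm, sd_two_mul]; exact ih

lemma sd_eq_one_iff {n : ℕ} (hn : n ≠ 0) : (Nat.digits 2 n).sum = 1 ↔ ∃ t, n = 2 ^ t := by
  constructor
  · intro h
    induction n using Nat.strong_induction_on with
    | _ n ih =>
      rw [Nat.digits_def' (by norm_num : 1 < 2) (by omega)] at h
      simp only [List.sum_cons] at h
      rcases Nat.even_or_odd n with he | ho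
      · have h2 : n % 2 = 0 := Nat.even_iff.mp he
        rw [h2, zero_add] at h
        have hn2 : n / 2 ≠ 0 := by
          intro h0; rw [h0] at h; simp at h
        obtain ⟨t, ht⟩ := ih (n / 2) (by omega) hn2 h
        exact ⟨t + 1, by rw [pow_succ, mul_comm]; omega⟩
      · have h2 : n % 2 = 1 := Nat.odd_iff.mp ho
        rw [h2] at h
        have : (Nat.digits 2 (n / 2)).sum = 0 := by omega
        have hz : n / 2 = 0 := by
          by_contra hc; exact sd_ne_zero hc this
        exact ⟨0, by omega⟩
  · rintro ⟨t, rfl⟩; exact sd_pow t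

lemma central_val {j : ℕ} (hj : 1 ≤ j) :
    ∃ O : ℕ, Odd O ∧ (2 * j).choose j = 2 ^ ((Nat.digits 2 j).sum) * O := by
  haveI : Fact (Nat.Prime 2) := ⟨Nat.prime_two⟩
  have hpos : 0 < (2 * j).choose j := Nat.choose_pos (by omega)
  have hv : ((2 * j).choose j).factorization 2 = (Nat.digits 2 j).sum := by
    rw [Nat.factorization_def _ Nat.prime_two]
    have h := sub_one_mul_padicValNat_choose_eq_sub_sum_digits' (p := 2) (k := j) (n := j)
    have h2 : j + j = 2 * j := by ring
    rw [h2, sd_two_mul j] at h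
    omega
  refine ⟨ordCompl[2] ((2*j).choose j), ?_, ?_⟩
  · rw [Nat.odd_iff, ← Nat.two_dvd_ne_zero]
    exact Nat.not_dvd_ordCompl Nat.prime_two (by omega)
  · rw [← hv]
    exact (Nat.ordProj_mul_ordCompl_eq_self ((2*j).choose j) 2).symm

lemma mod_iff_val (x t : ℕ) :
    x % 2 ^ (t + 1) = 2 ^ t - 1 ↔ padicValNat 2 (x + 1) = t := by
  haveI : Fact (Nat.Prime 2) := ⟨Nat.prime_two⟩
  have hp : 0 < (2:ℕ) ^ t := pow_pos (by norm_num) t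
  have hpp : (2:ℕ) ^ (t+1) = 2 * 2 ^ t := by rw [pow_succ]; ring
  constructor
  · intro hmod
    have hx : x + 1 = 2 ^ (t+1) * (x / 2 ^ (t+1)) + 2 ^ t := by
      have := Nat.div_add_mod x (2 ^ (t+1))
      omega
    have : x + 1 = 2 ^ t * (2 * (x / 2 ^ (t+1)) + 1) := by rw [hx]; ring
    rw [this, padicValNat.mul (by positivity) (by omega), padicValNat.prime_pow,
      padicValNat.eq_zero_of_not_dvd (by omega), add_zero]
  · intro hval
    obtain ⟨m, hm⟩ : 2 ^ t ∣ x + 1 := hval ▸ pow_padicValNat_dvd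
    have hodd : ¬ 2 ∣ m := by
      intro ⟨c, hc⟩
      have : 2 ^ (t+1) ∣ x + 1 := ⟨c, by rw [hm, hc]; ring⟩
      have := pow_succ_padicValNat_not_dvd (p := 2) (n := x+1) (by omega)
      rw [hval] at this
      exact this ‹_›
    obtain ⟨l, hl⟩ : ∃ l, m = 2 * l + 1 := ⟨m / 2, by omega⟩
    have hx : x = 2 ^ (t+1) * l + (2 ^ t - 1) := by
      rw [hpp]; have : x + 1 = 2 ^ t * (2 * l + 1) := by rw [hm, hl]
      have h2 : x + 1 = 2 * 2^t * l + 2^t := by rw [this]; ring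
      omega
    rw [hx, Nat.mul_add_mod]
    exact Nat.mod_eq_of_lt (by omega)


lemma lucas_two (n m : ℕ) :
    ((n.choose m : ℕ) : ZMod 2) = ((n % 2).choose (m % 2) : ℕ) * (((n / 2).choose (m / 2) : ℕ) : ZMod 2) := by
  haveI : Fact (Nat.Prime 2) := ⟨Nat.prime_two⟩
  have h := Choose.choose_modEq_choose_mod_mul_choose_div (p := 2) (n := n) (k := m)
  have := (ZMod.intCast_eq_intCast_iff _ _ _).mpr h
  push_cast at this ⊢
  exact_mod_cast this

lemma binom_parity (t x : ℕ) :
    (((x + 2 ^ t).choose (2 ^ (t + 1) - 1) : ℕ) : ZMod 2)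
      = if x % 2 ^ (t + 1) = 2 ^ t - 1 then 1 else 0 := by
  induction t generalizing x with
  | zero =>
    norm_num [Nat.choose_one_right]
    have hc : ((x:ZMod 2) + 1) = (((x+1) % 2 : ℕ) : ZMod 2) := by
      rw [ZMod.natCast_mod]; push_cast; ring
    rw [hc]
    rcases Nat.even_or_odd x with he | ho
    · have h0 : x % 2 = 0 := Nat.even_iff.mp he
      rw [if_pos (by omega)]
      have h1 : (x + 1) % 2 = 1 := by omega
      rw [h1]; norm_num
    · have h0 : x % 2 = 1 := Nat.odd_iff.mp ho
      rw [if_neg (by omega)]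
      have h1 : (x + 1) % 2 = 0 := by omega
      rw [h1]; norm_num
  | succ t ih =>
    have hP : 0 < (2:ℕ) ^ (t+1) := pow_pos (by norm_num) _
    have hQ : 0 < (2:ℕ) ^ t := pow_pos (by norm_num) _
    have e1 : (2:ℕ) ^ (t+1+1) = 2 * 2 ^ (t+1) := by rw [pow_succ]; ring
    have e2 : (2:ℕ) ^ (t+1) = 2 * 2 ^ t := by rw [pow_succ]; ring
    rw [lucas_two]
    have hn2 : (x + 2 ^ (t+1)) % 2 = x % 2 := by omega
    have hn2' : (x + 2 ^ (t+1)) / 2 = x / 2 + 2 ^ t := by omega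
    have hm2 : (2 ^ (t+1+1) - 1) % 2 = 1 := by omega
    have hm2' : (2 ^ (t+1+1) - 1) / 2 = 2 ^ (t+1) - 1 := by omega
    rw [hn2, hn2', hm2, hm2', Nat.choose_one_right, ih (x / 2)]
    have hmod0 : x % (2 * 2 ^ (t+1)) = 2 * (x / 2 % 2 ^ (t+1)) + x % 2 := by
      have h1 := Nat.mod_mul_right_div_self x 2 (2 ^ (t+1))
      have h2 : x % (2 * 2 ^ (t+1)) % 2 = x % 2 := Nat.mod_mod_of_dvd x ⟨2 ^ (t+1), rfl⟩
      omega
    have hmod : x % 2 ^ (t+1+1) = 2 * (x / 2 % 2 ^ (t+1)) + x % 2 := by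
      rw [e1]; exact hmod0
    have hB : (x % 2 ^ (t+1+1) = 2 ^ (t+1) - 1) ↔ (x % 2 = 1 ∧ x / 2 % 2 ^ (t+1) = 2 ^ t - 1) := by
      omega
    by_cases hA : x / 2 % 2 ^ (t+1) = 2 ^ t - 1 <;>
      rcases Nat.mod_two_eq_zero_or_one x with h2 | h2 <;>
        simp [hA, h2, hB]



lemma parity_sum (k x : ℕ) (hx : x < k) :
    ∑ j ∈ Icc 1 k, (if (Nat.digits 2 j).sum = 1
        then (((x + j).choose (2 * j - 1) : ℕ) : ZMod 2) else 0) = 1 := by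
  haveI : Fact (Nat.Prime 2) := ⟨Nat.prime_two⟩
  set t0 := padicValNat 2 (x + 1) with ht0
  have hdvd : 2 ^ t0 ∣ x + 1 := pow_padicValNat_dvd
  have hj0k : 2 ^ t0 ≤ k := le_trans (Nat.le_of_dvd (by omega) hdvd) (by omega)
  have hmem : 2 ^ t0 ∈ Icc 1 k := by
    simp only [mem_Icc]
    exact ⟨pow_pos (by norm_num : 0 < 2) _, hj0k⟩
  have key : ∀ j ∈ Icc 1 k,
      (if (Nat.digits 2 j).sum = 1
        then (((x + j).choose (2 * j - 1) : ℕ) : ZMod 2) else 0)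
      = if j = 2 ^ t0 then 1 else 0 := by
    intro j hj
    simp only [mem_Icc] at hj
    by_cases hσ : (Nat.digits 2 j).sum = 1
    · obtain ⟨t, rfl⟩ := (sd_eq_one_iff (by omega)).mp hσ
      rw [if_pos hσ]
      have h2 : 2 * 2 ^ t = 2 ^ (t + 1) := by rw [pow_succ]; ring
      rw [h2, binom_parity t x]
      by_cases hc : x % 2 ^ (t + 1) = 2 ^ t - 1
      · have : t = t0 := ((mod_iff_val x t).mp hc).symm
        rw [if_pos hc, if_pos (by rw [this]), eq_comm]
      · have hne : t ≠ t0 := fun h => hc ((mod_iff_val x t).mpr h.symm)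
        rw [if_neg hc, if_neg, eq_comm]
        intro h
        exact hne (Nat.pow_right_injective (by norm_num) h)
    · rw [if_neg hσ, if_neg, eq_comm]
      intro h
      exact hσ (h ▸ sd_pow t0)
  rw [Finset.sum_congr rfl key, Finset.sum_ite_eq' (Icc 1 k) (2 ^ t0) (fun _ => (1 : ZMod 2)),
    if_pos hmem]


lemma choose_mul_choose_sub (K n a : ℕ) (h : a ≤ n) :
    K.choose a * (K - a).choose (n - a) = K.choose n * n.choose a := by
  by_cases hnK : n ≤ K
  · exact (Nat.choose_mul h).symm
  · rw [Nat.choose_eq_zero_of_lt (by omega : K < n), zero_mul]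
    by_cases haK : a ≤ K
    · rw [Nat.choose_eq_zero_of_lt (by omega : K - a < n - a), mul_zero]
    · rw [Nat.choose_eq_zero_of_lt (by omega : K < a), zero_mul]

lemma delta_sum (K n : ℕ) :
    ∑ a ∈ range (n + 1), (-1 : ℤ) ^ a * (K.choose a : ℤ) * ((K - a).choose (n - a) : ℤ)
      = if n = 0 then 1 else 0 := by
  have h1 : ∀ a ∈ range (n + 1),
      (-1 : ℤ) ^ a * (K.choose a : ℤ) * ((K - a).choose (n - a) : ℤ)
        = (K.choose n : ℤ) * ((-1 : ℤ) ^ a * (n.choose a : ℤ)) := by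
    intro a ha
    simp only [mem_range] at ha
    have := choose_mul_choose_sub K n a (by omega)
    have hc : (K.choose a : ℤ) * ((K - a).choose (n - a) : ℤ) = (K.choose n : ℤ) * (n.choose a : ℤ) := by
      exact_mod_cast congrArg (Nat.cast : ℕ → ℤ) this
    calc (-1 : ℤ) ^ a * (K.choose a : ℤ) * ((K - a).choose (n - a) : ℤ)
        = (-1 : ℤ) ^ a * ((K.choose a : ℤ) * ((K - a).choose (n - a) : ℤ)) := by ring
      _ = (-1 : ℤ) ^ a * ((K.choose n : ℤ) * (n.choose a : ℤ)) := by rw [hc]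
      _ = (K.choose n : ℤ) * ((-1 : ℤ) ^ a * (n.choose a : ℤ)) := by ring
  rw [Finset.sum_congr rfl h1, ← Finset.mul_sum, Int.alternating_sum_range_choose]
  by_cases hn : n = 0 <;> simp [hn]

lemma delta_sum' (K n : ℕ) :
    ∑ a ∈ range (n + 1), (-1 : ℤ) ^ (n - a) * (K.choose a : ℤ) * ((K - a).choose (n - a) : ℤ)
      = if n = 0 then 1 else 0 := by
  have h1 : ∀ a ∈ range (n + 1),
      (-1 : ℤ) ^ (n - a) * (K.choose a : ℤ) * ((K - a).choose (n - a) : ℤ)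
        = (-1 : ℤ) ^ n * ((-1 : ℤ) ^ a * (K.choose a : ℤ) * ((K - a).choose (n - a) : ℤ)) := by
    intro a ha
    simp only [mem_range] at ha
    have : (-1 : ℤ) ^ (n - a) * (-1 : ℤ) ^ a = (-1 : ℤ) ^ n := by
      rw [← pow_add]; congr 1; omega
    have hsq : (-1 : ℤ) ^ a * (-1 : ℤ) ^ a = 1 := by
      rw [← pow_add, ← two_mul, pow_mul]; norm_num
    calc (-1 : ℤ) ^ (n - a) * (K.choose a : ℤ) * ((K - a).choose (n - a) : ℤ)
        = (-1 : ℤ) ^ (n - a) * ((-1:ℤ)^a * (-1:ℤ)^a) * ((K.choose a : ℤ) * ((K - a).choose (n - a) : ℤ)) := by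
          rw [hsq]; ring
      _ = ((-1 : ℤ) ^ (n - a) * (-1 : ℤ) ^ a) * ((-1:ℤ)^a * (K.choose a : ℤ) * ((K - a).choose (n - a) : ℤ)) := by
          ring
      _ = (-1 : ℤ) ^ n * ((-1 : ℤ) ^ a * (K.choose a : ℤ) * ((K - a).choose (n - a) : ℤ)) := by rw [this]
  rw [Finset.sum_congr rfl h1, ← Finset.mul_sum, delta_sum]
  by_cases hn : n = 0 <;> simp [hn]



lemma filter_Icc_le (m k r : ℕ) : (Icc m k).filter (fun j => r ≤ j) = Icc (max m r) k := by
  ext j; simp only [mem_filter, mem_Icc, max_le_iff]; omega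

lemma filter_Icc_ge (m k j : ℕ) : (Icc m k).filter (fun r => r ≤ j) = Icc m (min k j) := by
  ext r; simp only [mem_filter, mem_Icc, le_min_iff]; omega

-- inner delta over Icc m j
lemma delta_Icc (k m j : ℕ) (hmj : m ≤ j) :
    ∑ r ∈ Icc m j, (-1 : ℤ) ^ (r - m) * ((k - m).choose (r - m) : ℤ) * ((k - r).choose (j - r) : ℤ)
      = if j = m then 1 else 0 := by
  rw [← Finset.Ico_add_one_right_eq_Icc, Finset.sum_Ico_eq_sum_range]
  have hc : j + 1 - m = (j - m) + 1 := by omega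
  rw [hc]
  have h1 : ∀ i ∈ range ((j - m) + 1),
      (-1 : ℤ) ^ (m + i - m) * ((k - m).choose (m + i - m) : ℤ) * ((k - (m + i)).choose (j - (m + i)) : ℤ)
        = (-1 : ℤ) ^ i * ((k - m).choose i : ℤ) * (((k - m) - i).choose ((j - m) - i) : ℤ) := by
    intro i hi
    simp only [mem_range] at hi
    have e1 : m + i - m = i := by omega
    have e2 : j - (m + i) = (j - m) - i := by omega
    have e3 : k - (m + i) = (k - m) - i := by omega
    rw [e1, e2, e3]
  rw [Finset.sum_congr rfl h1, delta_sum]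
  by_cases h : j = m
  · rw [if_pos h, if_pos (by omega)]
  · rw [if_neg (by omega), if_neg h]

lemma delta_Icc' (k m r : ℕ) (hmr : m ≤ r) :
    ∑ j ∈ Icc m r, ((k - m).choose (j - m) : ℤ) * ((-1 : ℤ) ^ (r - j) * ((k - j).choose (r - j) : ℤ))
      = if r = m then 1 else 0 := by
  rw [← Finset.Ico_add_one_right_eq_Icc, Finset.sum_Ico_eq_sum_range]
  have hc : r + 1 - m = (r - m) + 1 := by omega
  rw [hc]
  have h1 : ∀ i ∈ range ((r - m) + 1),
      ((k - m).choose (m + i - m) : ℤ) * ((-1 : ℤ) ^ (r - (m + i)) * ((k - (m + i)).choose (r - (m + i)) : ℤ))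
        = (-1 : ℤ) ^ ((r - m) - i) * ((k - m).choose i : ℤ) * (((k - m) - i).choose ((r - m) - i) : ℤ) := by
    intro i hi
    simp only [mem_range] at hi
    have e1 : m + i - m = i := by omega
    have e2 : r - (m + i) = (r - m) - i := by omega
    have e3 : k - (m + i) = (k - m) - i := by omega
    rw [e1, e2, e3]; ring
  rw [Finset.sum_congr rfl h1, delta_sum']
  by_cases h : r = m
  · rw [if_pos h, if_pos (by omega)]
  · rw [if_neg (by omega), if_neg h]

lemma inv1 (k m : ℕ) (hm : m ≤ k) (v : ℕ → ℤ) :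
    ∑ r ∈ Icc m k, (-1 : ℤ) ^ (r - m) * ((k - m).choose (r - m) : ℤ) *
      (∑ j ∈ Icc r k, ((k - r).choose (j - r) : ℤ) * v j) = v m := by
  have step1 : ∀ r ∈ Icc m k,
      (-1 : ℤ) ^ (r - m) * ((k - m).choose (r - m) : ℤ) *
        (∑ j ∈ Icc r k, ((k - r).choose (j - r) : ℤ) * v j)
      = ∑ j ∈ Icc m k, (if r ≤ j then
          (-1 : ℤ) ^ (r - m) * ((k - m).choose (r - m) : ℤ) * (((k - r).choose (j - r) : ℤ) * v j) else 0) := by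
    intro r hr
    simp only [mem_Icc] at hr
    have : Icc r k = (Icc m k).filter (fun j => r ≤ j) := by
      rw [filter_Icc_le]; congr 1; omega
    rw [this, ← Finset.sum_filter, Finset.mul_sum]
  rw [Finset.sum_congr rfl step1, Finset.sum_comm]
  have step2 : ∀ j ∈ Icc m k,
      (∑ r ∈ Icc m k, if r ≤ j then
          (-1 : ℤ) ^ (r - m) * ((k - m).choose (r - m) : ℤ) * (((k - r).choose (j - r) : ℤ) * v j) else 0)
      = v j * (if j = m then 1 else 0) := by
    intro j hj
    simp only [mem_Icc] at hj
    rw [← Finset.sum_filter, filter_Icc_ge]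
    have : min k j = j := by omega
    rw [this, ← delta_Icc k m j hj.1, Finset.mul_sum]
    refine Finset.sum_congr rfl fun r hr => by ring
  rw [Finset.sum_congr rfl step2]
  have : ∀ j ∈ Icc m k, v j * (if j = m then 1 else 0) = if j = m then v j else 0 := by
    intro j _; by_cases h : j = m <;> simp [h]
  rw [Finset.sum_congr rfl this, Finset.sum_ite_eq' (Icc m k) m v, if_pos (by simp [mem_Icc, hm])]

lemma inv2 (k m : ℕ) (hm : m ≤ k) (v : ℕ → ℤ) :
    ∑ j ∈ Icc m k, ((k - m).choose (j - m) : ℤ) *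
      (∑ r ∈ Icc j k, (-1 : ℤ) ^ (r - j) * ((k - j).choose (r - j) : ℤ) * v r) = v m := by
  have step1 : ∀ j ∈ Icc m k,
      ((k - m).choose (j - m) : ℤ) *
        (∑ r ∈ Icc j k, (-1 : ℤ) ^ (r - j) * ((k - j).choose (r - j) : ℤ) * v r)
      = ∑ r ∈ Icc m k, (if j ≤ r then
          ((k - m).choose (j - m) : ℤ) * ((-1 : ℤ) ^ (r - j) * ((k - j).choose (r - j) : ℤ) * v r) else 0) := by
    intro j hj
    simp only [mem_Icc] at hj
    have : Icc j k = (Icc m k).filter (fun r => j ≤ r) := by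
      rw [filter_Icc_le]; congr 1; omega
    rw [this, ← Finset.sum_filter, Finset.mul_sum]
  rw [Finset.sum_congr rfl step1, Finset.sum_comm]
  have step2 : ∀ r ∈ Icc m k,
      (∑ j ∈ Icc m k, if j ≤ r then
          ((k - m).choose (j - m) : ℤ) * ((-1 : ℤ) ^ (r - j) * ((k - j).choose (r - j) : ℤ) * v r) else 0)
      = v r * (if r = m then 1 else 0) := by
    intro r hr
    simp only [mem_Icc] at hr
    rw [← Finset.sum_filter, filter_Icc_ge]
    have : min k r = r := by omega
    rw [this, ← delta_Icc' k m r hr.1, Finset.mul_sum]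
    refine Finset.sum_congr rfl fun j hj => by ring
  rw [Finset.sum_congr rfl step2]
  have : ∀ r ∈ Icc m k, v r * (if r = m then 1 else 0) = if r = m then v r else 0 := by
    intro r _; by_cases h : r = m <;> simp [h]
  rw [Finset.sum_congr rfl this, Finset.sum_ite_eq' (Icc m k) m v, if_pos (by simp [mem_Icc, hm])]


lemma modEq_sum {α : Type*} (s : Finset α) (f g : α → ℤ) (n : ℤ)
    (h : ∀ i ∈ s, f i ≡ g i [ZMOD n]) : (∑ i ∈ s, f i) ≡ (∑ i ∈ s, g i) [ZMOD n] := by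
  classical
  induction s using Finset.induction_on with
  | empty => simp
  | @insert a s' hx ih =>
    rw [Finset.sum_insert hx, Finset.sum_insert hx]
    exact (h a (mem_insert_self a s')).add (ih fun i hi => h i (mem_insert_of_mem hi))

lemma tri (k : ℕ) (N : ℤ) (z : ℕ → ℤ)
    (hz : ∀ x < k, (∑ j ∈ Icc 1 k, z j * (((x + j).choose (2 * j - 1) : ℕ) : ℤ)) ≡ 0 [ZMOD N]) :
    ∀ m, 1 ≤ m → m ≤ k → z m ≡ 0 [ZMOD N] := by
  intro m
  induction m using Nat.strong_induction_on with
  | _ m ih =>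
    intro hm1 hmk
    have hx := hz (m - 1) (by omega)
    have key : (∑ j ∈ Icc 1 k, z j * (((m - 1 + j).choose (2 * j - 1) : ℕ) : ℤ))
        ≡ (∑ j ∈ Icc 1 k, if j = m then z m else 0) [ZMOD N] := by
      apply modEq_sum
      intro j hj
      simp only [mem_Icc] at hj
      rcases lt_trichotomy j m with hlt | heq | hgt
      · rw [if_neg (by omega)]
        have h0 : z j ≡ 0 [ZMOD N] := ih j hlt (by omega) (by omega)
        calc z j * _ ≡ 0 * _ [ZMOD N] := h0.mul_right _
          _ = 0 := by ring
      · rw [heq, if_pos rfl]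
        have e : m - 1 + m = 2 * m - 1 := by omega
        rw [e, Nat.choose_self]
        simp [Int.ModEq.refl]
      · rw [if_neg (by omega)]
        have e : (m - 1 + j).choose (2 * j - 1) = 0 :=
          Nat.choose_eq_zero_of_lt (by omega)
        rw [e]
        simp [Int.ModEq.refl]
    rw [Finset.sum_ite_eq' (Icc 1 k) m (fun _ => z m), if_pos (by simp [mem_Icc]; omega)] at key
    exact (key.symm.trans hx)


lemma filter_Icc_le' (m k r : ℕ) : (Icc m k).filter (fun j => r ≤ j) = Icc (max m r) k := by
  ext j; simp only [mem_filter, mem_Icc, max_le_iff]; omega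

lemma filter_Icc_ge' (m k j : ℕ) : (Icc m k).filter (fun r => r ≤ j) = Icc m (min k j) := by
  ext r; simp only [mem_filter, mem_Icc, le_min_iff]; omega

lemma swap_sum (k : ℕ) (F : ℕ → ℕ → ℤ) :
    ∑ r ∈ Icc 1 k, ∑ j ∈ Icc 1 r, F r j = ∑ j ∈ Icc 1 k, ∑ r ∈ Icc j k, F r j := by
  have h1 : ∀ r ∈ Icc 1 k, ∑ j ∈ Icc 1 r, F r j
      = ∑ j ∈ Icc 1 k, if j ≤ r then F r j else 0 := by
    intro r hr
    simp only [mem_Icc] at hr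
    rw [← Finset.sum_filter, filter_Icc_ge']
    congr 1
    congr 1
    omega
  have h2 : ∀ j ∈ Icc 1 k, (∑ r ∈ Icc 1 k, if j ≤ r then F r j else 0)
      = ∑ r ∈ Icc j k, F r j := by
    intro j hj
    simp only [mem_Icc] at hj
    rw [← Finset.sum_filter, filter_Icc_le']
    congr 1
    congr 1
    omega
  rw [Finset.sum_congr rfl h1, Finset.sum_comm, Finset.sum_congr rfl h2]

def uu (k : ℕ) (w : ℕ → ℤ) (j : ℕ) : ℤ :=
  ∑ r ∈ Finset.Icc j k, (-1 : ℤ) ^ (r - j) * ((k - j).choose (r - j) : ℤ) * w r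

lemma diff_formula (k : ℕ) (w : ℕ → ℤ) (x : ℕ) :
    (∑ r ∈ Icc 1 k, w r * ∑ j ∈ range (r + 1), (-1 : ℤ) ^ (r - j) *
        ((2 * j).choose j : ℤ) * ((k - j).choose (r - j) : ℤ) * (((x + 1) + j).choose (2 * j) : ℤ))
    - (∑ r ∈ Icc 1 k, w r * ∑ j ∈ range (r + 1), (-1 : ℤ) ^ (r - j) *
        ((2 * j).choose j : ℤ) * ((k - j).choose (r - j) : ℤ) * ((x + j).choose (2 * j) : ℤ))
    = ∑ j ∈ Icc 1 k, ((2 * j).choose j : ℤ) * uu k w j * ((x + j).choose (2 * j - 1) : ℤ) := by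
  rw [← Finset.sum_sub_distrib]
  have step1 : ∀ r ∈ Icc 1 k,
      (w r * ∑ j ∈ range (r + 1), (-1 : ℤ) ^ (r - j) *
        ((2 * j).choose j : ℤ) * ((k - j).choose (r - j) : ℤ) * (((x + 1) + j).choose (2 * j) : ℤ))
      - (w r * ∑ j ∈ range (r + 1), (-1 : ℤ) ^ (r - j) *
        ((2 * j).choose j : ℤ) * ((k - j).choose (r - j) : ℤ) * ((x + j).choose (2 * j) : ℤ))
      = ∑ j ∈ Icc 1 r, w r * ((-1 : ℤ) ^ (r - j) *
          ((2 * j).choose j : ℤ) * ((k - j).choose (r - j) : ℤ) * ((x + j).choose (2 * j - 1) : ℤ)) := by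
    intro r hr
    rw [← mul_sub, ← Finset.sum_sub_distrib]
    have expand : ∑ j ∈ range (r + 1),
        ((-1 : ℤ) ^ (r - j) * ((2 * j).choose j : ℤ) * ((k - j).choose (r - j) : ℤ) * (((x + 1) + j).choose (2 * j) : ℤ)
         - (-1 : ℤ) ^ (r - j) * ((2 * j).choose j : ℤ) * ((k - j).choose (r - j) : ℤ) * ((x + j).choose (2 * j) : ℤ))
        = ∑ j ∈ Icc 1 r, ((-1 : ℤ) ^ (r - j) *
          ((2 * j).choose j : ℤ) * ((k - j).choose (r - j) : ℤ) * ((x + j).choose (2 * j - 1) : ℤ)) := by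
      rw [Finset.sum_range_succ']
      have hzero : (-1 : ℤ) ^ (r - 0) * ((2 * 0).choose 0 : ℤ) * ((k - 0).choose (r - 0) : ℤ) * (((x + 1) + 0).choose (2 * 0) : ℤ)
          - (-1 : ℤ) ^ (r - 0) * ((2 * 0).choose 0 : ℤ) * ((k - 0).choose (r - 0) : ℤ) * ((x + 0).choose (2 * 0) : ℤ) = 0 := by
        simp
      rw [hzero, add_zero]
      rw [← Finset.Ico_add_one_right_eq_Icc, Finset.sum_Ico_eq_sum_range]
      have hcnt : r + 1 - 1 = r := by omega
      rw [hcnt]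
      refine Finset.sum_congr rfl fun i hi => ?_
      have e0 : 1 + i = i + 1 := by omega
      rw [e0]
      have e1 : (x + 1) + (i + 1) = (x + (i + 1)) + 1 := by omega
      have e2 : 2 * (i + 1) = (2 * (i + 1) - 1) + 1 := by omega
      have hp : (((x + 1) + (i + 1)).choose (2 * (i + 1)) : ℤ)
          = ((x + (i + 1)).choose (2 * (i + 1) - 1) : ℤ) + ((x + (i + 1)).choose (2 * (i + 1)) : ℤ) := by
        rw [e1, e2, Nat.choose_succ_succ', ← e2]
        push_cast; ring
      rw [hp]; ring
    rw [expand, Finset.mul_sum]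
  rw [Finset.sum_congr rfl step1, swap_sum]
  refine Finset.sum_congr rfl fun j hj => ?_
  unfold uu
  rw [Finset.mul_sum, Finset.sum_mul]
  refine Finset.sum_congr rfl fun r hr => by ring


lemma sub_cong_zero {a b n : ℤ} : a - b ≡ 0 [ZMOD n] ↔ a ≡ b [ZMOD n] := by
  constructor
  · intro hh
    have := hh.add_right b
    simpa using this
  · intro hh
    have := hh.sub_right b
    simpa using this

lemma coprime_pow_two_odd (n : ℕ) {O : ℤ} (hO : Odd O) : IsCoprime ((2 : ℤ) ^ n) O := by
  obtain ⟨c, rfl⟩ := hO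
  exact IsCoprime.pow_left ⟨-c, 1, by ring⟩

lemma odd_unit_cong {h : ℕ} (hh : 1 ≤ h) {O u : ℤ} (hO : Odd O)
    (hcong : 2 * O * u ≡ 2 ^ h [ZMOD 2 ^ (h + 1)]) : u ≡ 2 ^ (h - 1) [ZMOD 2 ^ h] := by
  have eh : (2 : ℤ) ^ h = 2 * 2 ^ (h - 1) := by
    rw [← pow_succ']; congr 1; omega
  have eh1 : (2 : ℤ) ^ (h + 1) = 2 * 2 ^ h := by rw [← pow_succ']
  obtain ⟨c, hc⟩ := (Int.modEq_iff_dvd.mp hcong)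
  -- hc : 2 ^ h - 2 * O * u = 2 ^ (h+1) * c
  have hOu : O * u = 2 ^ (h - 1) - 2 ^ h * c := by
    have h2 : 2 * (O * u) = 2 * (2 ^ (h - 1) - 2 ^ h * c) := by
      have e3 : (2:ℤ) * (2 ^ (h - 1) - 2 ^ h * c) = 2 ^ h - 2 ^ (h+1) * c := by
        rw [eh1, eh]; ring
      rw [e3]
      have : (2:ℤ) * (O * u) = 2 * O * u := by ring
      rw [this]
      linarith [hc]
    exact mul_left_cancel₀ (by norm_num) h2
  have hdvd : (2 : ℤ) ^ (h - 1) ∣ u * O := ⟨1 - 2 * c, by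
    rw [show u * O = O * u by ring, hOu, eh]; ring⟩
  obtain ⟨d, hd⟩ := (coprime_pow_two_odd (h - 1) hO).dvd_of_dvd_mul_right hdvd
  obtain ⟨o, ho⟩ := hO
  have hOd : O * d = 1 - 2 * c := by
    have h2 : 2 ^ (h - 1) * (O * d) = 2 ^ (h - 1) * (1 - 2 * c) := by
      calc 2 ^ (h - 1) * (O * d) = O * u := by rw [hd]; ring
        _ = 2 ^ (h - 1) - 2 ^ h * c := hOu
        _ = 2 ^ (h - 1) * (1 - 2 * c) := by rw [eh]; ring
    exact mul_left_cancel₀ (by positivity) h2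
  have hdodd : ∃ e, d = 2 * e + 1 := by
    rcases Int.even_or_odd d with ⟨e, he⟩ | ⟨e, he⟩
    · exfalso
      rw [ho, he] at hOd
      have h2 : (2:ℤ) ∣ 1 := ⟨(2 * o + 1) * e + c, by linear_combination -1 * hOd⟩
      norm_num at h2
    · exact ⟨e, he⟩
  obtain ⟨e, he⟩ := hdodd
  rw [Int.modEq_iff_dvd]
  refine ⟨-e, ?_⟩
  rw [hd, he, eh]
  ring
lemma odd_unit_cong' {h : ℕ} (hh : 1 ≤ h) {O u : ℤ} (hO : Odd O)
    (hcong : u ≡ 2 ^ (h - 1) [ZMOD 2 ^ h]) : 2 * O * u ≡ 2 ^ h [ZMOD 2 ^ (h + 1)] := by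
  have eh : (2 : ℤ) ^ h = 2 * 2 ^ (h - 1) := by
    rw [← pow_succ']; congr 1; omega
  have eh1 : (2 : ℤ) ^ (h + 1) = 2 * 2 ^ h := by rw [← pow_succ']
  obtain ⟨t, ht⟩ := Int.modEq_iff_dvd.mp hcong
  -- ht : 2 ^ (h-1) - u = 2 ^ h * t
  obtain ⟨o, ho⟩ := hO
  rw [Int.modEq_iff_dvd]
  refine ⟨(2 * o + 1) * t - o, ?_⟩
  have hu : u = 2 ^ (h - 1) - 2 ^ h * t := by omega
  rw [hu, ho, eh1, eh]
  ring

/-- Characterization of perfect state transfer at time `π/2^h` on unweighted unions of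
distance graphs of the Johnson scheme `J(2k,k)` (0/1 weights `w_r`): the eigenvalue
differences satisfy `f(x+1) - f(x) ≡ 2^h (mod 2^{h+1})` for all `x ∈ {0,…,k-1}` iff
there are integers `v_j` with `v_j ≡ 2^{h-1} (mod 2^h)` when `σ₂(j) = 1`,
`2^{h+1-σ₂(j)} ∣ v_j` when `2 ≤ σ₂(j) ≤ h`, and
`w_r ≡ Σ_{j=1}^k v_j C(k-r, j-r) (mod 2^h)` for all `r ∈ {1,…,k}`. -/
theorem stmt_16 (k h : ℕ) (hk : 1 ≤ k) (hh : 1 ≤ h)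
    (w : ℕ → ℤ) (hw : ∀ r, 1 ≤ r → r ≤ k → w r = 0 ∨ w r = 1)
    (f : ℕ → ℤ)
    (hf : ∀ x, f x = ∑ r ∈ Finset.Icc 1 k, w r *
        ∑ j ∈ Finset.range (r + 1), (-1 : ℤ) ^ (r - j) *
          (Nat.choose (2 * j) j : ℤ) * (Nat.choose (k - j) (r - j) : ℤ) *
          (Nat.choose (x + j) (2 * j) : ℤ)) :
    (∀ x < k, f (x + 1) - f x ≡ 2 ^ h [ZMOD 2 ^ (h + 1)]) ↔
      (∃ v : ℕ → ℤ,
        (∀ j, 1 ≤ j → j ≤ k → (Nat.digits 2 j).sum = 1 →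
          v j ≡ 2 ^ (h - 1) [ZMOD 2 ^ h]) ∧
        (∀ j, 1 ≤ j → j ≤ k → 2 ≤ (Nat.digits 2 j).sum → (Nat.digits 2 j).sum ≤ h →
          (2 : ℤ) ^ (h + 1 - (Nat.digits 2 j).sum) ∣ v j) ∧
        (∀ r, 1 ≤ r → r ≤ k →
          w r ≡ ∑ j ∈ Finset.Icc 1 k,
            v j * (if r ≤ j then (Nat.choose (k - r) (j - r) : ℤ) else 0)
              [ZMOD 2 ^ h])) := by
  -- difference formula
  have hg : ∀ x, f (x + 1) - f x
      = ∑ j ∈ Icc 1 k, ((2 * j).choose j : ℤ) * uu k w j * ((x + j).choose (2 * j - 1) : ℤ) := by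
    intro x
    rw [hf (x + 1), hf x]
    exact diff_formula k w x
  -- parity of the epsilon-weighted row sums
  have hS : ∀ x, x < k →
      (∑ j ∈ Icc 1 k, (if (Nat.digits 2 j).sum = 1 then (1 : ℤ) else 0)
        * ((x + j).choose (2 * j - 1) : ℤ)) ≡ 1 [ZMOD 2] := by
    intro x hx
    have hp := parity_sum k x hx
    have hcast : ((∑ j ∈ Icc 1 k, (if (Nat.digits 2 j).sum = 1 then (1 : ℤ) else 0)
        * ((x + j).choose (2 * j - 1) : ℤ) : ℤ) : ZMod 2) = ((1 : ℤ) : ZMod 2) := by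
      push_cast
      refine Eq.trans ?_ hp
      refine Finset.sum_congr rfl fun j hj => ?_
      by_cases hσ : (Nat.digits 2 j).sum = 1 <;> simp [hσ]
    have := (ZMod.intCast_eq_intCast_iff _ _ _).mp hcast
    simpa using this
  have h2S : ∀ x, x < k →
      (2 : ℤ) ^ h * (∑ j ∈ Icc 1 k, (if (Nat.digits 2 j).sum = 1 then (1 : ℤ) else 0)
        * ((x + j).choose (2 * j - 1) : ℤ)) ≡ 2 ^ h [ZMOD 2 ^ (h + 1)] := by
    intro x hx
    have hmul := (hS x hx).mul_left' (c := (2 : ℤ) ^ h)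
    rw [mul_one] at hmul
    have e : (2 : ℤ) ^ h * 2 = 2 ^ (h + 1) := by rw [pow_succ]
    rwa [e] at hmul
  -- generic conversion between the if-sum and the Icc r k sum
  have hconv : ∀ (vv : ℕ → ℤ) (r : ℕ), 1 ≤ r →
      (∑ j ∈ Icc 1 k, vv j * (if r ≤ j then ((k - r).choose (j - r) : ℤ) else 0))
      = ∑ j ∈ Icc r k, ((k - r).choose (j - r) : ℤ) * vv j := by
    intro vv r hr
    have e1 : ∀ j ∈ Icc 1 k, vv j * (if r ≤ j then ((k - r).choose (j - r) : ℤ) else 0)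
        = if r ≤ j then vv j * ((k - r).choose (j - r) : ℤ) else 0 := by
      intro j _
      by_cases hc : r ≤ j <;> simp [hc]
    rw [Finset.sum_congr rfl e1, ← Finset.sum_filter, filter_Icc_le]
    have e2 : max 1 r = r := by omega
    rw [e2]
    exact Finset.sum_congr rfl fun j _ => by ring
  -- the per-eigenvalue condition
  have step1 : (∀ x < k, f (x + 1) - f x ≡ 2 ^ h [ZMOD 2 ^ (h + 1)]) ↔
      (∀ j, 1 ≤ j → j ≤ k →
        ((2 * j).choose j : ℤ) * uu k w j
          ≡ 2 ^ h * (if (Nat.digits 2 j).sum = 1 then (1 : ℤ) else 0) [ZMOD 2 ^ (h + 1)]) := by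
    constructor
    · intro H j hj1 hjk
      have hz : ∀ x < k,
          (∑ j ∈ Icc 1 k, (((2 * j).choose j : ℤ) * uu k w j
            - 2 ^ h * (if (Nat.digits 2 j).sum = 1 then (1 : ℤ) else 0))
            * ((x + j).choose (2 * j - 1) : ℤ)) ≡ 0 [ZMOD 2 ^ (h + 1)] := by
        intro x hx
        have e : (∑ j ∈ Icc 1 k, (((2 * j).choose j : ℤ) * uu k w j
            - 2 ^ h * (if (Nat.digits 2 j).sum = 1 then (1 : ℤ) else 0))
            * ((x + j).choose (2 * j - 1) : ℤ))
            = (∑ j ∈ Icc 1 k, ((2 * j).choose j : ℤ) * uu k w j * ((x + j).choose (2 * j - 1) : ℤ))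
              - 2 ^ h * (∑ j ∈ Icc 1 k, (if (Nat.digits 2 j).sum = 1 then (1 : ℤ) else 0)
                * ((x + j).choose (2 * j - 1) : ℤ)) := by
          rw [Finset.mul_sum, ← Finset.sum_sub_distrib]
          exact Finset.sum_congr rfl fun _ _ => by ring
        rw [e, ← hg x]
        exact sub_cong_zero.mpr ((H x hx).trans (h2S x hx).symm)
      have := tri k (2 ^ (h + 1))
        (fun j => ((2 * j).choose j : ℤ) * uu k w j
          - 2 ^ h * (if (Nat.digits 2 j).sum = 1 then (1 : ℤ) else 0)) hz j hj1 hjk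
      exact sub_cong_zero.mp this
    · intro H x hx
      rw [hg x]
      have h1 : (∑ j ∈ Icc 1 k, ((2 * j).choose j : ℤ) * uu k w j * ((x + j).choose (2 * j - 1) : ℤ))
          ≡ (∑ j ∈ Icc 1 k, 2 ^ h * (if (Nat.digits 2 j).sum = 1 then (1 : ℤ) else 0)
            * ((x + j).choose (2 * j - 1) : ℤ)) [ZMOD 2 ^ (h + 1)] := by
        refine modEq_sum _ _ _ _ fun j hj => ?_
        simp only [mem_Icc] at hj
        exact (H j hj.1 hj.2).mul_right _
      have h2 : (∑ j ∈ Icc 1 k, 2 ^ h * (if (Nat.digits 2 j).sum = 1 then (1 : ℤ) else 0)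
            * ((x + j).choose (2 * j - 1) : ℤ))
          = 2 ^ h * (∑ j ∈ Icc 1 k, (if (Nat.digits 2 j).sum = 1 then (1 : ℤ) else 0)
            * ((x + j).choose (2 * j - 1) : ℤ)) := by
        rw [Finset.mul_sum]
        exact Finset.sum_congr rfl fun _ _ => by ring
      rw [h2] at h1
      exact h1.trans (h2S x hx)
  rw [step1]
  constructor
  · -- forward: take v := uu k w
    intro H
    refine ⟨uu k w, ?_, ?_, ?_⟩
    · intro j hj1 hjk hσ
      obtain ⟨O, hOodd, hCO⟩ := central_val hj1
      have hOZ : Odd (O : ℤ) := by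
        obtain ⟨c, hc⟩ := hOodd
        exact ⟨(c : ℤ), by exact_mod_cast hc⟩
      have hCint : ((2 * j).choose j : ℤ) = 2 * (O : ℤ) := by
        rw [hCO, hσ]
        push_cast
        ring
      have hP := H j hj1 hjk
      rw [if_pos hσ, mul_one, hCint] at hP
      exact odd_unit_cong hh hOZ hP
    · intro j hj1 hjk hs2 hsh
      obtain ⟨O, hOodd, hCO⟩ := central_val hj1
      have hOZ : Odd (O : ℤ) := by
        obtain ⟨c, hc⟩ := hOodd
        exact ⟨(c : ℤ), by exact_mod_cast hc⟩
      have hCint : ((2 * j).choose j : ℤ) = 2 ^ ((Nat.digits 2 j).sum) * (O : ℤ) := by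
        rw [hCO]; push_cast; ring
      have hP := H j hj1 hjk
      rw [if_neg (by omega), mul_zero] at hP
      have hdvd : (2 : ℤ) ^ (h + 1) ∣ ((2 * j).choose j : ℤ) * uu k w j :=
        Int.modEq_zero_iff_dvd.mp hP
      have hsplit : (2 : ℤ) ^ (h + 1) = 2 ^ ((Nat.digits 2 j).sum) * 2 ^ (h + 1 - (Nat.digits 2 j).sum) := by
        rw [← pow_add]; congr 1; omega
      have h0 : (2 : ℤ) ^ ((Nat.digits 2 j).sum) * 2 ^ (h + 1 - (Nat.digits 2 j).sum)
          ∣ 2 ^ ((Nat.digits 2 j).sum) * ((O : ℤ) * uu k w j) := by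
        rw [← hsplit]
        have : ((2 * j).choose j : ℤ) * uu k w j
            = 2 ^ ((Nat.digits 2 j).sum) * ((O : ℤ) * uu k w j) := by
          rw [hCint]; ring
        rw [← this]
        exact hdvd
      have h1 : (2 : ℤ) ^ (h + 1 - (Nat.digits 2 j).sum) ∣ (O : ℤ) * uu k w j :=
        (mul_dvd_mul_iff_left (a := (2 : ℤ) ^ ((Nat.digits 2 j).sum)) (by positivity)).mp h0
      have h1' : (2 : ℤ) ^ (h + 1 - (Nat.digits 2 j).sum) ∣ uu k w j * (O : ℤ) := by
        rwa [mul_comm] at h1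
      exact (coprime_pow_two_odd _ hOZ).dvd_of_dvd_mul_right h1'
    · intro r hr1 hrk
      have hww : (∑ j ∈ Icc r k, ((k - r).choose (j - r) : ℤ) * uu k w j) = w r := inv2 k r hrk w
      rw [hconv (uu k w) r hr1, hww]
  · -- backward
    rintro ⟨v, hva, hvb, hvc⟩ j hj1 hjk
    have hcv : ∀ r, 1 ≤ r → r ≤ k →
        w r ≡ (∑ j ∈ Icc r k, ((k - r).choose (j - r) : ℤ) * v j) [ZMOD 2 ^ h] := by
      intro r h1 h2
      have := hvc r h1 h2
      rwa [hconv v r h1] at this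
    have huv : uu k w j ≡ v j [ZMOD 2 ^ h] := by
      have hA := inv1 k j hjk v
      calc uu k w j
          = ∑ r ∈ Icc j k, (-1 : ℤ) ^ (r - j) * ((k - j).choose (r - j) : ℤ) * w r := rfl
        _ ≡ ∑ r ∈ Icc j k, (-1 : ℤ) ^ (r - j) * ((k - j).choose (r - j) : ℤ) *
              (∑ i ∈ Icc r k, ((k - r).choose (i - r) : ℤ) * v i) [ZMOD 2 ^ h] := by
            refine modEq_sum _ _ _ _ fun r hr => ?_
            simp only [mem_Icc] at hr
            exact (hcv r (by omega) hr.2).mul_left _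
        _ = v j := hA
    obtain ⟨O, hOodd, hCO⟩ := central_val hj1
    have hOZ : Odd (O : ℤ) := by
      obtain ⟨c, hc⟩ := hOodd
      exact ⟨(c : ℤ), by exact_mod_cast hc⟩
    have hs1 : 1 ≤ (Nat.digits 2 j).sum := by
      have := sd_ne_zero (show j ≠ 0 by omega)
      omega
    by_cases hσ : (Nat.digits 2 j).sum = 1
    · rw [if_pos hσ, mul_one]
      have hCint : ((2 * j).choose j : ℤ) = 2 * (O : ℤ) := by
        rw [hCO, hσ]; push_cast; ring
      rw [hCint]
      exact odd_unit_cong' hh hOZ (huv.trans (hva j hj1 hjk hσ))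
    · rw [if_neg hσ, mul_zero]
      have hCint : ((2 * j).choose j : ℤ) = 2 ^ ((Nat.digits 2 j).sum) * (O : ℤ) := by
        rw [hCO]; push_cast; ring
      apply Int.modEq_zero_iff_dvd.mpr
      by_cases hsh : (Nat.digits 2 j).sum ≤ h
      · -- 2 ≤ s ≤ h
        have hvd : (2 : ℤ) ^ (h + 1 - (Nat.digits 2 j).sum) ∣ v j := hvb j hj1 hjk (by omega) hsh
        have hud : (2 : ℤ) ^ (h + 1 - (Nat.digits 2 j).sum) ∣ uu k w j := by
          obtain ⟨t, ht⟩ := Int.modEq_iff_dvd.mp huv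
          -- ht : v j - uu k w j = 2 ^ h * t
          obtain ⟨vv, hvv⟩ := hvd
          refine ⟨vv - 2 ^ ((Nat.digits 2 j).sum - 1) * t, ?_⟩
          have hpow : (2 : ℤ) ^ h
              = 2 ^ (h + 1 - (Nat.digits 2 j).sum) * 2 ^ ((Nat.digits 2 j).sum - 1) := by
            rw [← pow_add]; congr 1; omega
          have huu2 : uu k w j = v j - 2 ^ h * t := by linarith [ht]
          rw [huu2, hvv, hpow]
          ring
        obtain ⟨uu', huu'⟩ := hud
        refine ⟨(O : ℤ) * uu', ?_⟩
        have hsplit : (2 : ℤ) ^ (h + 1)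
            = 2 ^ ((Nat.digits 2 j).sum) * 2 ^ (h + 1 - (Nat.digits 2 j).sum) := by
          rw [← pow_add]; congr 1; omega
        rw [hCint, huu', hsplit]
        ring
      · -- s ≥ h + 1
        refine ⟨2 ^ ((Nat.digits 2 j).sum - (h + 1)) * (O : ℤ) * uu k w j, ?_⟩
        have hsplit : (2 : ℤ) ^ ((Nat.digits 2 j).sum)
            = 2 ^ (h + 1) * 2 ^ ((Nat.digits 2 j).sum - (h + 1)) := by
          rw [← pow_add]; congr 1; omega
        rw [hCint, hsplit]
        ring
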